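/- Consider the abstract cycle recursion for one strain with arbitrary real growth durations s_c. If X(c) converges to a positive limit as c → ∞, then X(c) ≥ X_e for every c ≥ 1. -/

import Mathlib

open scoped Classical

/-- Extinction indicator: `Ie Xe x = 1` if `x ≥ Xe`, else `0`. -/
noncomputable def Ie (Xe x : ℝ) : ℝ := if Xe ≤ x then 1 else 0

/-- in the abstract one-strain cycle recursion (index `0` is the
inoculum `X(1)`), a strain converging to a positive limit never falls below the
extinction limit. -/
theorem stmt8 (μ k tk D Xe : ℝ) (hμ : 0 < μ) (hk : 0 ≤ k) (htk : 0 < tk)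
    (hD0 : 0 < D) (hD1 : D < 1) (hXe : 0 < Xe) (s : ℕ → ℝ) (X : ℕ → ℝ)
    (hX0 : 0 ≤ X 0)
    (hrec : ∀ c, X (c + 1) = D * X c * Real.exp (μ * s c * Ie Xe (X c) - k * tk))
    (L : ℝ) (hL : 0 < L) (h : Filter.Tendsto X Filter.atTop (nhds L)) :
    ∀ c, Xe ≤ X c := by
  -- nonnegativity
  have hnn : ∀ c, 0 ≤ X c := by
    intro c
    induction c with
    | zero => exact hX0
    | succ n ih =>
      rw [hrec n]
      positivity
  set r : ℝ := D * Real.exp (-(k * tk)) with hr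
  have hr0 : 0 < r := by positivity
  have hr1 : r < 1 := by
    have he : Real.exp (-(k * tk)) ≤ 1 := by
      rw [Real.exp_le_one_iff]
      nlinarith
    nlinarith [Real.exp_pos (-(k * tk))]
  by_contra hcon
  push_neg at hcon
  obtain ⟨c, hc⟩ := hcon
  -- once below Xe, X(c+n) ≤ r^n * X c and stays below Xe
  have key : ∀ n, X (c + n) < Xe ∧ X (c + n) ≤ r ^ n * X c := by
    intro n
    induction n with
    | zero => simp [hc, le_refl]
    | succ m ih =>
      obtain ⟨h1, h2⟩ := ih
      have hstep : X (c + m + 1) = r * X (c + m) := by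
        rw [hrec (c + m)]
        have : Ie Xe (X (c + m)) = 0 := by
          simp [Ie, not_le.mpr h1]
        rw [this]
        ring_nf
        rw [hr]; ring
      have hle : X (c + (m + 1)) ≤ r * X (c + m) := by
        rw [show c + (m + 1) = c + m + 1 by ring, hstep]
      constructor
      · calc X (c + (m + 1)) ≤ r * X (c + m) := hle
          _ < 1 * Xe := by
            rcases lt_or_ge (X (c + m)) Xe with h' | h'
            · nlinarith [hnn (c + m)]
            · exact absurd h' (not_le.mpr h1)
          _ = Xe := one_mul Xe
      · calc X (c + (m + 1)) ≤ r * X (c + m) := hle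
          _ ≤ r * (r ^ m * X c) := by nlinarith
          _ = r ^ (m + 1) * X c := by ring
  -- the shifted sequence tends to L but is squeezed to 0
  have hshift : Filter.Tendsto (fun n => X (c + n)) Filter.atTop (nhds L) := by
    have h' := h.comp (Filter.tendsto_add_atTop_nat c)
    have heq : (fun n => X (c + n)) = X ∘ (fun n => n + c) := by
      funext n; simp [Function.comp, Nat.add_comm]
    rw [heq]
    exact h'
  have hgeo : Filter.Tendsto (fun n => r ^ n * X c) Filter.atTop (nhds 0) := by
    have := (tendsto_pow_atTop_nhds_zero_of_lt_one hr0.le hr1).mul_const (X c)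
    simpa using this
  have hL0 : L ≤ 0 := by
    exact le_of_tendsto_of_tendsto' hshift hgeo (fun n => (key n).2)
  linarith
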